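/- Let A, B > 0 with J₁ = J₃ = A, J₂ = B; let ω : ℝ → ℝ³ satisfy the torque-free Euler equations and q : ℝ → ℝ⁴ satisfy the quaternion kinematic equation for ω with unit initial value. Fix a docking vector d = (0, δ, 0) along the body 2-axis and let p(t) := R(q(t)) · d be its position in the LVLH frame. Then for all t ∈ ℝ: ‖p(t)‖ = |δ|, and the inner product of p(t) with the (constant) spatial angular momentum L := R(q(t))·(Aω₁(t), Bω₂(t), Aω₃(t)) equals the constant B·ω₂(0)·δ. Consequently the docking point of the tumbling target moves on a fixed circle (the intersection of a sphere with a plane) whenever L ≠ 0. -/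

import Mathlib

open Matrix

/-- The rotation matrix associated to a quaternion `(q₁, q₂, q₃, q₄)` (scalar part `q₄`). -/
def rotMat (q : Fin 4 → ℝ) : Matrix (Fin 3) (Fin 3) ℝ :=
  !![q 0 ^ 2 - q 1 ^ 2 - q 2 ^ 2 + q 3 ^ 2, 2 * (q 0 * q 1 - q 2 * q 3), 2 * (q 0 * q 2 + q 1 * q 3);
     2 * (q 0 * q 1 + q 2 * q 3), -q 0 ^ 2 + q 1 ^ 2 - q 2 ^ 2 + q 3 ^ 2, 2 * (q 1 * q 2 - q 0 * q 3);
     2 * (q 0 * q 2 - q 1 * q 3), 2 * (q 1 * q 2 + q 0 * q 3), -q 0 ^ 2 - q 1 ^ 2 + q 2 ^ 2 + q 3 ^ 2]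

/-- For a tumbling rotationally symmetric target (`J₁ = J₃ = A`, `J₂ = B`), a docking
point `d = (0, δ, 0)` on the body 2-axis keeps constant distance `|δ|` from the center
of mass and constant inner product `B ω₂(0) δ` with the spatial angular momentum:
it moves on a fixed circle (sphere ∩ plane) whenever the angular momentum is nonzero. -/
theorem docking_point_on_circle (A B : ℝ) (hA : 0 < A) (hB : 0 < B)
    (ω : ℝ → Fin 3 → ℝ)
    (he1 : ∀ t : ℝ, HasDerivAt (fun s => ω s 0) (ω t 1 * ω t 2 * (B - A) / A) t)
    (he2 : ∀ t : ℝ, HasDerivAt (fun s => ω s 1) (ω t 0 * ω t 2 * (A - A) / B) t)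
    (he3 : ∀ t : ℝ, HasDerivAt (fun s => ω s 2) (ω t 0 * ω t 1 * (A - B) / A) t)
    (q : ℝ → Fin 4 → ℝ)
    (hq1 : ∀ t : ℝ, HasDerivAt (fun s => q s 0)
      (1 / 2 * (ω t 2 * q t 1 - ω t 1 * q t 2 + ω t 0 * q t 3)) t)
    (hq2 : ∀ t : ℝ, HasDerivAt (fun s => q s 1)
      (1 / 2 * (-(ω t 2) * q t 0 + ω t 0 * q t 2 + ω t 1 * q t 3)) t)
    (hq3 : ∀ t : ℝ, HasDerivAt (fun s => q s 2)
      (1 / 2 * (ω t 1 * q t 0 - ω t 0 * q t 1 + ω t 2 * q t 3)) t)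
    (hq4 : ∀ t : ℝ, HasDerivAt (fun s => q s 3)
      (1 / 2 * (-(ω t 0) * q t 0 - ω t 1 * q t 1 - ω t 2 * q t 2)) t)
    (hinit : q 0 0 ^ 2 + q 0 1 ^ 2 + q 0 2 ^ 2 + q 0 3 ^ 2 = 1)
    (δ : ℝ) (p : ℝ → Fin 3 → ℝ) (hp : ∀ t : ℝ, p t = rotMat (q t) *ᵥ ![0, δ, 0])
    (L : ℝ → Fin 3 → ℝ)
    (hL : ∀ t : ℝ, L t = rotMat (q t) *ᵥ ![A * ω t 0, B * ω t 1, A * ω t 2]) :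
    ∀ t : ℝ,
      Real.sqrt ((p t 0) ^ 2 + (p t 1) ^ 2 + (p t 2) ^ 2) = |δ| ∧
      p t 0 * L t 0 + p t 1 * L t 1 + p t 2 * L t 2 = B * ω 0 1 * δ := by

  -- ω₂ is constant
  have hω2 : ∀ t : ℝ, ω t 1 = ω 0 1 := by
    have h0 : ∀ t : ℝ, HasDerivAt (fun s => ω s 1) 0 t := by
      intro t; simpa using he2 t
    intro t
    exact is_const_of_deriv_eq_zero (fun x => (h0 x).differentiableAt)
      (fun x => (h0 x).deriv) t 0
  -- quaternion norm is constant
  have hNd : ∀ t : ℝ, HasDerivAt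
      (fun s => q s 0 ^ 2 + q s 1 ^ 2 + q s 2 ^ 2 + q s 3 ^ 2) 0 t := by
    intro t
    have h := ((((hq1 t).fun_pow 2).fun_add ((hq2 t).fun_pow 2)).fun_add ((hq3 t).fun_pow 2)).fun_add ((hq4 t).fun_pow 2)
    refine h.congr_deriv ?_
    ring
  have hN : ∀ t : ℝ, q t 0 ^ 2 + q t 1 ^ 2 + q t 2 ^ 2 + q t 3 ^ 2 = 1 := by
    intro t
    have := is_const_of_deriv_eq_zero (f := fun s => q s 0 ^ 2 + q s 1 ^ 2 + q s 2 ^ 2 + q s 3 ^ 2)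
      (fun x => (hNd x).differentiableAt) (fun x => (hNd x).deriv) t 0
    simpa [this] using hinit
  intro t
  have hNt := hN t
  have hωt := hω2 t
  have hps : p t 0 ^ 2 + p t 1 ^ 2 + p t 2 ^ 2 = δ ^ 2 := by
    simp only [hp, rotMat, Matrix.mulVec, dotProduct, Fin.sum_univ_three,
      Matrix.cons_val', Matrix.cons_val_zero, Matrix.cons_val_one, Matrix.head_cons,
      Matrix.empty_val', Matrix.cons_val_fin_one, Matrix.head_fin_const,
      Matrix.cons_val_two, Matrix.tail_cons, Matrix.of_apply]
    linear_combination (δ ^ 2 * (q t 0 ^ 2 + q t 1 ^ 2 + q t 2 ^ 2 + q t 3 ^ 2 + 1)) * hNt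
  constructor
  · rw [hps, Real.sqrt_sq_eq_abs]
  · simp only [hp, hL, rotMat, Matrix.mulVec, dotProduct, Fin.sum_univ_three,
      Matrix.cons_val', Matrix.cons_val_zero, Matrix.cons_val_one, Matrix.head_cons,
      Matrix.empty_val', Matrix.cons_val_fin_one, Matrix.head_fin_const,
      Matrix.cons_val_two, Matrix.tail_cons, Matrix.of_apply]
    linear_combination (B * δ * ω t 1 * (q t 0 ^ 2 + q t 1 ^ 2 + q t 2 ^ 2 + q t 3 ^ 2 + 1)) * hNt + B * δ * hωt
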